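/- A vector ξ ∈ ℂ² ⊗ ℂ² ⊗ ℂ² lies in S_V = V^⊥ if and only if there exist (a, b, c, d) ∈ ℂ⁴ such that, in the standard basis, ξ = (d + 2(a+b+c))|000⟩ + a|100⟩ + b|010⟩ + c|001⟩ − a|110⟩ − b|011⟩ − c|101⟩ + d|111⟩. Moreover, the map sending (a, b, c, d) ∈ ℂ⁴ to this vector is a linear bijection from ℂ⁴ onto S_V. -/

import Mathlib

noncomputable section

abbrev Q : Type := EuclideanSpace ℂ (Fin 2)
abbrev Q2 : Type := EuclideanSpace ℂ (Fin 2 × Fin 2)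
abbrev Q3 : Type := EuclideanSpace ℂ (Fin 2 × Fin 2 × Fin 2)

/-- standard basis vector of ℂ² -/
def ket2 (i : Fin 2) : Q := EuclideanSpace.single i 1

/-- the state |+⟩ -/
def plus : Q := (Real.sqrt 2 : ℂ)⁻¹ • (ket2 0 + ket2 1)

/-- the state |−⟩ -/
def minus : Q := (Real.sqrt 2 : ℂ)⁻¹ • (ket2 0 - ket2 1)

/-- elementary tensor of three qubit vectors, in ℂ² ⊗ ℂ² ⊗ ℂ² ≅ ℂ⁸ -/
def tp3 (u v w : Q) : Q3 := WithLp.toLp 2 (fun p : Fin 2 × Fin 2 × Fin 2 => u p.1 * v p.2.1 * w p.2.2)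

/-- a product vector in ℂ² ⊗ ℂ² ⊗ ℂ² -/
def IsProd3 (ξ : Q3) : Prop := ∃ u v w : Q, ξ = tp3 u v w

/-- the set of one-dimensional subspaces of `T` spanned by (nonzero) product vectors -/
def prodLines3 (T : Submodule ℂ Q3) : Set (Submodule ℂ Q3) :=
  {L | ∃ ξ : Q3, ξ ≠ 0 ∧ ξ ∈ T ∧ IsProd3 ξ ∧ L = Submodule.span ℂ {ξ}}

/-- a factorized vector across the bipartite cut {1} | {2,3} -/
def cut1 (u : Q) (η : Q2) : Q3 := WithLp.toLp 2 (fun p : Fin 2 × Fin 2 × Fin 2 => u p.1 * η p.2)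

/-- a factorized vector across the bipartite cut {2} | {1,3} -/
def cut2 (u : Q) (η : Q2) : Q3 := WithLp.toLp 2 (fun p : Fin 2 × Fin 2 × Fin 2 => u p.2.1 * η (p.1, p.2.2))

/-- a factorized vector across the bipartite cut {3} | {1,2} -/
def cut3 (u : Q) (η : Q2) : Q3 := WithLp.toLp 2 (fun p : Fin 2 × Fin 2 × Fin 2 => u p.2.2 * η (p.1, p.2.1))

def φ₁ : Q3 := tp3 (ket2 0) (ket2 1) plus
def φ₂ : Q3 := tp3 (ket2 1) plus (ket2 0)
def φ₃ : Q3 := tp3 plus (ket2 0) (ket2 1)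
def φ₄ : Q3 := tp3 minus minus minus

/-- the span of the three-qubit UPB of Bennett et al. -/
def V3 : Submodule ℂ Q3 := Submodule.span ℂ {φ₁, φ₂, φ₃, φ₄}

/-- the orthogonal complement of the span of the three-qubit UPB -/
def SV : Submodule ℂ Q3 := V3ᗮ

/-- the standard basis vector |xyz⟩ of ℂ² ⊗ ℂ² ⊗ ℂ² -/
def ketE (x y z : Fin 2) : Q3 := tp3 (ket2 x) (ket2 y) (ket2 z)

/-- the general element of `S_V` parametrized by `(a, b, c, d) ∈ ℂ⁴` -/
def svVec (a b c d : ℂ) : Q3 :=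
  (d + 2 * (a + b + c)) • ketE 0 0 0 + a • ketE 1 0 0 + b • ketE 0 1 0 + c • ketE 0 0 1
    - a • ketE 1 1 0 - b • ketE 0 1 1 - c • ketE 1 0 1 + d • ketE 1 1 1

lemma sqrt2c_ne : ((Real.sqrt 2 : ℂ))⁻¹ ≠ 0 :=
  inv_ne_zero (by exact_mod_cast (Complex.ofReal_ne_zero.mpr (by positivity)))

lemma inner1 (ξ : Q3) : (inner ℂ φ₁ ξ : ℂ) = (Real.sqrt 2:ℂ)⁻¹ * (ξ (0,1,0) + ξ (0,1,1)) := by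
  simp [PiLp.inner_apply, Fintype.sum_prod_type, Fin.sum_univ_two, φ₁, tp3, ket2, plus,
    EuclideanSpace.single_apply, RCLike.inner_apply]
  ring

lemma inner2 (ξ : Q3) : (inner ℂ φ₂ ξ : ℂ) = (Real.sqrt 2:ℂ)⁻¹ * (ξ (1,0,0) + ξ (1,1,0)) := by
  simp [PiLp.inner_apply, Fintype.sum_prod_type, Fin.sum_univ_two, φ₂, tp3, ket2, plus,
    EuclideanSpace.single_apply, RCLike.inner_apply]
  ring

lemma inner3 (ξ : Q3) : (inner ℂ φ₃ ξ : ℂ) = (Real.sqrt 2:ℂ)⁻¹ * (ξ (0,0,1) + ξ (1,0,1)) := by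
  simp [PiLp.inner_apply, Fintype.sum_prod_type, Fin.sum_univ_two, φ₃, tp3, ket2, plus,
    EuclideanSpace.single_apply, RCLike.inner_apply]
  ring

lemma inner4 (ξ : Q3) : (inner ℂ φ₄ ξ : ℂ) = (Real.sqrt 2:ℂ)⁻¹ ^ 3 *
    (ξ (0,0,0) - ξ (0,0,1) - ξ (0,1,0) + ξ (0,1,1)
      - ξ (1,0,0) + ξ (1,0,1) + ξ (1,1,0) - ξ (1,1,1)) := by
  simp [PiLp.inner_apply, Fintype.sum_prod_type, Fin.sum_univ_two, φ₄, tp3, ket2, minus,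
    EuclideanSpace.single_apply, RCLike.inner_apply]
  ring

lemma mem_SV_iff (ξ : Q3) : ξ ∈ SV ↔ ∃ a b c d : ℂ, ξ = svVec a b c d := by
  constructor
  · intro h
    have h1 := (Submodule.mem_orthogonal _ _).1 h φ₁ (Submodule.subset_span (by simp))
    have h2 := (Submodule.mem_orthogonal _ _).1 h φ₂ (Submodule.subset_span (by simp))
    have h3 := (Submodule.mem_orthogonal _ _).1 h φ₃ (Submodule.subset_span (by simp))
    have h4 := (Submodule.mem_orthogonal _ _).1 h φ₄ (Submodule.subset_span (by simp))
    rw [inner1] at h1; rw [inner2] at h2; rw [inner3] at h3; rw [inner4] at h4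
    have e1 := (mul_eq_zero.1 h1).resolve_left sqrt2c_ne
    have e2 := (mul_eq_zero.1 h2).resolve_left sqrt2c_ne
    have e3 := (mul_eq_zero.1 h3).resolve_left sqrt2c_ne
    have e4 := (mul_eq_zero.1 h4).resolve_left (pow_ne_zero 3 sqrt2c_ne)
    refine ⟨ξ (1,0,0), ξ (0,1,0), ξ (0,0,1), ξ (1,1,1), ?_⟩
    ext p
    fin_cases p <;>
      simp only [svVec, ketE, tp3, ket2, EuclideanSpace.single_apply, PiLp.toLp_apply, PiLp.add_apply,
        PiLp.sub_apply, PiLp.smul_apply, smul_eq_mul] <;>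
      norm_num <;>
      simp -failIfUnchanged only [Fin.zero_eta, Fin.mk_one] <;>
      first
        | ring1
        | linear_combination e1
        | linear_combination e2
        | linear_combination e3
        | linear_combination e4 - e1 - e2 - e3
  · rintro ⟨a, b, c, d, rfl⟩
    rw [SV, Submodule.mem_orthogonal]
    intro u hu
    induction hu using Submodule.span_induction with
    | mem x hx =>
        simp only [Set.mem_insert_iff, Set.mem_singleton_iff] at hx
        rcases hx with rfl | rfl | rfl | rfl
        · rw [inner1]
          simp only [svVec, ketE, tp3, ket2, EuclideanSpace.single_apply, PiLp.toLp_apply, PiLp.add_apply,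
            PiLp.sub_apply, PiLp.smul_apply, smul_eq_mul]
          norm_num
        · rw [inner2]
          simp only [svVec, ketE, tp3, ket2, EuclideanSpace.single_apply, PiLp.toLp_apply, PiLp.add_apply,
            PiLp.sub_apply, PiLp.smul_apply, smul_eq_mul]
          norm_num
        · rw [inner3]
          simp only [svVec, ketE, tp3, ket2, EuclideanSpace.single_apply, PiLp.toLp_apply, PiLp.add_apply,
            PiLp.sub_apply, PiLp.smul_apply, smul_eq_mul]
          norm_num
        · rw [inner4]
          simp only [svVec, ketE, tp3, ket2, EuclideanSpace.single_apply, PiLp.toLp_apply, PiLp.add_apply,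
            PiLp.sub_apply, PiLp.smul_apply, smul_eq_mul]
          norm_num
          ring
    | zero => exact inner_zero_left _
    | add x y _ _ hx hy => rw [inner_add_left, hx, hy, add_zero]
    | smul t x _ hx => rw [inner_smul_left, hx, mul_zero]

lemma svVec_linear (a b c d a' b' c' d' t : ℂ) :
    svVec (a + t*a') (b + t*b') (c + t*c') (d + t*d')
      = svVec a b c d + t • svVec a' b' c' d' := by
  ext p
  fin_cases p <;>
    simp only [svVec, ketE, tp3, ket2, EuclideanSpace.single_apply, PiLp.toLp_apply, PiLp.add_apply,
      PiLp.sub_apply, PiLp.smul_apply, smul_eq_mul] <;>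
    norm_num <;> ring

theorem statement6 :
    (∀ ξ : Q3, ξ ∈ SV ↔ ∃ a b c d : ℂ, ξ = svVec a b c d) ∧
    (∃ f : (ℂ × ℂ × ℂ × ℂ) →ₗ[ℂ] Q3,
      (∀ a b c d : ℂ, f (a, b, c, d) = svVec a b c d) ∧
      Function.Injective f ∧ Set.range f = (SV : Set Q3)) := by
  refine ⟨mem_SV_iff, ?_⟩
  refine ⟨{ toFun := fun x => svVec x.1 x.2.1 x.2.2.1 x.2.2.2
            map_add' := ?_, map_smul' := ?_ }, fun a b c d => rfl, ?_, ?_⟩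
  · rintro ⟨a, b, c, d⟩ ⟨a', b', c', d'⟩
    have := svVec_linear a b c d a' b' c' d' 1
    simpa using this
  · rintro t ⟨a, b, c, d⟩
    have h0 : svVec 0 0 0 0 = 0 := by
      ext p
      fin_cases p <;>
        simp [svVec, ketE, tp3, ket2, EuclideanSpace.single_apply]
    have := svVec_linear 0 0 0 0 a b c d t
    simp only [zero_add, h0] at this
    simp only [RingHom.id_apply, Prod.smul_fst, Prod.smul_snd, smul_eq_mul]
    rw [this]
  · rintro ⟨a, b, c, d⟩ ⟨a', b', c', d'⟩ h
    simp only at h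
    have ha := congrArg (fun v : Q3 => v (1,0,0)) h
    have hb := congrArg (fun v : Q3 => v (0,1,0)) h
    have hc := congrArg (fun v : Q3 => v (0,0,1)) h
    have hd := congrArg (fun v : Q3 => v (1,1,1)) h
    simp [svVec, ketE, tp3, ket2, EuclideanSpace.single_apply] at ha hb hc hd
    simp [Prod.ext_iff, ha, hb, hc, hd]
  · ext ξ
    simp only [Set.mem_range, SetLike.mem_coe, mem_SV_iff]
    constructor
    · rintro ⟨⟨a, b, c, d⟩, rfl⟩
      exact ⟨a, b, c, d, rfl⟩
    · rintro ⟨a, b, c, d, rfl⟩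
      exact ⟨(a, b, c, d), rfl⟩
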